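/- Let m be a positive integer with species X_1, ..., X_m (identified with the standard basis vectors e_1, ..., e_m of ℝ^m), and for each i let R_i and P_i be subsets of the species with R̲_i and P̲_i the sums of their elements (vectors in ℝ^m with 0/1 coordinates). Consider the chemical reaction network whose reactions are the pairs R'_i = { R̲_i → X_i + R̲_i, X_i + P̲_i → P̲_i } for i = 1, ..., m (the embedded representation of an S-system). Then the reaction sets R'_1, ..., R'_m are pairwise disjoint and form an independent decomposition of the network: the stoichiometric subspace of each subnetwork is span{X_i}, the network rank is s = m, and s = s_1 + ... + s_m. -/

import Mathlib

open scoped Classical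

noncomputable section

/-- A reaction: an ordered pair (reactant complex, product complex) of vectors in ℝ^S. -/
abbrev Rxn (S : Type*) := (S → ℝ) × (S → ℝ)

variable {S : Type*} [Fintype S]

/-- The set of complexes occurring in a reaction set. -/
def complexesOf (R : Finset (Rxn S)) : Finset (S → ℝ) :=
  R.image Prod.fst ∪ R.image Prod.snd

/-- `(C, R)` is a chemical reaction network on the species set `S`:
complexes have nonnegative integer coordinates, reactions go between complexes,
no reaction is a loop, and every complex occurs in at least one reaction. -/
def IsCRN (C : Finset (S → ℝ)) (R : Finset (Rxn S)) : Prop :=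
  C.Nonempty ∧ R.Nonempty ∧
  (∀ y ∈ C, ∀ s, ∃ n : ℕ, y s = (n : ℝ)) ∧
  (∀ r ∈ R, r.1 ∈ C ∧ r.2 ∈ C) ∧
  (∀ r ∈ R, r.1 ≠ r.2) ∧
  (∀ y ∈ C, ∃ r ∈ R, r.1 = y ∨ r.2 = y)

/-- The stoichiometric subspace `span {y' - y : (y, y') ∈ R}`. -/
def stoichSubspace (R : Finset (Rxn S)) : Submodule ℝ (S → ℝ) :=
  Submodule.span ℝ ((fun r : Rxn S => r.2 - r.1) '' ↑R)

/-- The rank `s = dim S` of the network. -/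
def crnRank (R : Finset (Rxn S)) : ℕ := Module.finrank ℝ (stoichSubspace R)

/-- The standard basis vector `ω_y` of the complex space `ℝ^C` (realized inside
the space of real-valued functions on complexes). -/
def omegaC (y : S → ℝ) : (S → ℝ) → ℝ := fun z => if z = y then 1 else 0

/-- The image of the incidence map `I_a`, i.e. the span of the vectors
`ω_{y'} - ω_y` over reactions `y → y'`. -/
def incImage (R : Finset (Rxn S)) : Submodule ℝ ((S → ℝ) → ℝ) :=
  Submodule.span ℝ ((fun r : Rxn S => omegaC r.2 - omegaC r.1) '' ↑R)

/-- The underlying undirected graph of `(C, R)`, on the complexes occurring in `R`. -/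
def linkGraph (R : Finset (Rxn S)) : SimpleGraph {y : S → ℝ // y ∈ complexesOf R} where
  Adj a b := a ≠ b ∧ ((a.1, b.1) ∈ R ∨ (b.1, a.1) ∈ R)
  symm := ⟨fun a b h => ⟨h.1.symm, h.2.symm⟩⟩
  loopless := ⟨fun a h => h.1 rfl⟩

/-- `n`, the number of complexes. -/
def numComplexes (R : Finset (Rxn S)) : ℕ := (complexesOf R).card

/-- `l`, the number of linkage classes (connected components of the
underlying undirected graph). -/
def numLinkageClasses (R : Finset (Rxn S)) : ℕ :=
  Nat.card (linkGraph R).ConnectedComponent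

/-- The deficiency `δ = n - l - s` (as an integer). -/
def deficiency (R : Finset (Rxn S)) : ℤ :=
  (numComplexes R : ℤ) - (numLinkageClasses R : ℤ) - (crnRank R : ℤ)

/-- A covering of the reaction set `R`: a family of subsets of `R` whose union is `R`. -/
def IsCovering {ι : Type*} (R : Finset (Rxn S)) (f : ι → Finset (Rxn S)) : Prop :=
  (∀ i, f i ⊆ R) ∧ ∀ r ∈ R, ∃ i, r ∈ f i

/-- A decomposition of the reaction set `R`: a partition of `R` into nonempty subsets. -/
def IsDecomposition {ι : Type*} (R : Finset (Rxn S)) (f : ι → Finset (Rxn S)) : Prop :=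
  (∀ i, (f i).Nonempty) ∧ (Pairwise fun i j => Disjoint (f i) (f j)) ∧
  (∀ i, f i ⊆ R) ∧ (∀ r ∈ R, ∃ i, r ∈ f i)

/-- Independence: the stoichiometric subspace is the direct sum of those of the subnetworks. -/
def IsIndependent {ι : Type*} (R : Finset (Rxn S)) (f : ι → Finset (Rxn S)) : Prop :=
  (⨆ i, stoichSubspace (f i)) = stoichSubspace R ∧
  iSupIndep fun i => stoichSubspace (f i)

/-- Incidence independence: the image of the incidence map is the direct sum of the
images of the incidence maps of the subnetworks. -/
def IsIncidenceIndependent {ι : Type*} (R : Finset (Rxn S)) (f : ι → Finset (Rxn S)) : Prop :=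
  (⨆ i, incImage (f i)) = incImage R ∧
  iSupIndep fun i => incImage (f i)

/-- A `𝒞`-decomposition: the complex sets of the subnetworks are pairwise disjoint. -/
def CDisjoint {ι : Type*} (f : ι → Finset (Rxn S)) : Prop :=
  Pairwise fun i j => Disjoint (complexesOf (f i)) (complexesOf (f j))

/-- The set of nonzero complexes of a reaction set. -/
def nonzeroComplexesOf (R : Finset (Rxn S)) : Finset (S → ℝ) := (complexesOf R).erase 0

/-- A `𝒞*`-decomposition: the sets of nonzero complexes are pairwise disjoint. -/
def CstarDisjoint {ι : Type*} (f : ι → Finset (Rxn S)) : Prop :=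
  Pairwise fun i j => Disjoint (nonzeroComplexesOf (f i)) (nonzeroComplexesOf (f j))

/-- A coarsening: each block of `f` is contained in exactly one block of `g`. -/
def IsCoarsening {ι κ : Type*} (f : ι → Finset (Rxn S)) (g : κ → Finset (Rxn S)) : Prop :=
  ∀ i, ∃! j, f i ⊆ g j

/-- Undirected reachability in the graph `(C, R)`. -/
def undirReach (R : Finset (Rxn S)) : (S → ℝ) → (S → ℝ) → Prop :=
  Relation.ReflTransGen fun y z => (y, z) ∈ R ∨ (z, y) ∈ R

/-- Directed reachability in the digraph `(C, R)`. -/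
def dirReach (R : Finset (Rxn S)) : (S → ℝ) → (S → ℝ) → Prop :=
  Relation.ReflTransGen fun y z => (y, z) ∈ R

/-- Weak reversibility: every connected component of the directed graph `(C, R)`
is strongly connected. -/
def WeaklyReversible (R : Finset (Rxn S)) : Prop :=
  ∀ y z, undirReach R y z → dirReach R y z

/-- The set of complex balanced equilibria `Z₊(N, K)` of a kinetics `K` on the
(sub)network with reaction set `R`: positive vectors `x` with `I_a K(x) = 0`. -/
def Zplus (R : Finset (Rxn S)) (K : (S → ℝ) → Rxn S → ℝ) : Set (S → ℝ) :=
  {x | (∀ s, 0 < x s) ∧ ∑ r ∈ R, K x r • (omegaC r.2 - omegaC r.1) = 0}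

/-- The reactions lying in the linkage class of the zero complex. -/
def zeroLinkReactions (R : Finset (Rxn S)) : Finset (Rxn S) :=
  R.filter fun r => undirReach R 0 r.1

/-- The reaction set of the linkage class `c`: all reactions whose complexes lie in `c`. -/
def lcReactions (R : Finset (Rxn S)) (c : (linkGraph R).ConnectedComponent) :
    Finset (Rxn S) :=
  R.filter fun r => ∃ h : r.1 ∈ complexesOf R, (linkGraph R).connectedComponentMk ⟨r.1, h⟩ = c

/-- The network has independent linkage classes (ILC): the linkage class
decomposition is independent. -/
def HasILC (R : Finset (Rxn S)) : Prop := IsIndependent R (lcReactions R)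


section Helpers

variable {m : ℕ}

lemma aux_key1 {i j : Fin m} (hij : i ≠ j) (u v : Fin m → ℝ)
    (h1 : u = v) (h2 : Pi.single i 1 + u = Pi.single j 1 + v) : False := by
  rw [h1] at h2
  have := congrFun (add_right_cancel h2) i
  simp [Pi.single_apply, hij] at this

lemma aux_key2 {i j : Fin m} (u v : Fin m → ℝ)
    (h1 : u = Pi.single j 1 + v) (h2 : Pi.single i 1 + u = v) : False := by
  subst h1
  have := congrFun h2 i
  simp [Pi.single_apply] at this
  split_ifs at this <;> linarith

lemma aux_span_pair (i : Fin m) :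
    Submodule.span ℝ ({Pi.single i 1, -Pi.single i 1} : Set (Fin m → ℝ)) =
      Submodule.span ℝ {(Pi.single i 1 : Fin m → ℝ)} := by
  apply le_antisymm
  · rw [Submodule.span_le]
    rintro x hx
    simp only [Set.mem_insert_iff, Set.mem_singleton_iff] at hx
    rcases hx with rfl | rfl
    · exact Submodule.subset_span rfl
    · exact Submodule.neg_mem _ (Submodule.subset_span rfl)
  · exact Submodule.span_mono (Set.singleton_subset_iff.mpr (Set.mem_insert _ _))

lemma aux_stoich (i : Fin m) (u v : Fin m → ℝ) :
    stoichSubspace ({(u, Pi.single i 1 + u), (Pi.single i 1 + v, v)} : Finset (Rxn (Fin m))) =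
      Submodule.span ℝ {(Pi.single i 1 : Fin m → ℝ)} := by
  unfold stoichSubspace
  have himg : (fun r : Rxn (Fin m) => r.2 - r.1) ''
      ↑({(u, Pi.single i 1 + u), (Pi.single i 1 + v, v)} : Finset (Rxn (Fin m))) =
      ({Pi.single i 1, -Pi.single i 1} : Set (Fin m → ℝ)) := by
    simp only [Finset.coe_insert, Finset.coe_singleton, Set.image_insert_eq, Set.image_singleton]
    congr 1
    · abel
    · congr 1
      abel
  rw [himg]
  exact aux_span_pair i

lemma aux_basisFun_eq :
    ⇑(Pi.basisFun ℝ (Fin m)) = fun i : Fin m => (Pi.single i 1 : Fin m → ℝ) :=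
  funext fun i => by simp

lemma aux_li : LinearIndependent ℝ (fun i : Fin m => (Pi.single i 1 : Fin m → ℝ)) := by
  have h := (Pi.basisFun ℝ (Fin m)).linearIndependent
  rwa [aux_basisFun_eq] at h

lemma aux_sup_top : (⨆ i : Fin m, Submodule.span ℝ {(Pi.single i 1 : Fin m → ℝ)}) = ⊤ := by
  rw [Submodule.iSup_span]
  rw [show (⋃ i : Fin m, ({Pi.single i 1} : Set (Fin m → ℝ))) =
      Set.range (fun i : Fin m => (Pi.single i 1 : Fin m → ℝ)) by
    ext x; simp [Set.range, eq_comm]]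
  have h := (Pi.basisFun ℝ (Fin m)).span_eq
  rwa [aux_basisFun_eq] at h

end Helpers


/-- in the embedded representation of an S-system, the reaction pairs
R'_i = {R̲_i → X_i + R̲_i, X_i + P̲_i → P̲_i} are pairwise disjoint and form an independent
decomposition; each subnetwork has stoichiometric subspace span{X_i}, the rank is
s = m, and s = s_1 + ... + s_m. -/
theorem stmt_18 (m : ℕ) (hm : 0 < m) (Rset Pset : Fin m → Finset (Fin m))
    (Rb Pb : Fin m → (Fin m → ℝ))
    (hRb : ∀ i, Rb i = ∑ j ∈ Rset i, Pi.single j (1 : ℝ))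
    (hPb : ∀ i, Pb i = ∑ j ∈ Pset i, Pi.single j (1 : ℝ))
    (f : Fin m → Finset (Rxn (Fin m)))
    (hf : ∀ i, f i = {(Rb i, Pi.single i 1 + Rb i), (Pi.single i 1 + Pb i, Pb i)})
    (R : Finset (Rxn (Fin m))) (hR : R = Finset.univ.sup f) :
    (Pairwise fun i j => Disjoint (f i) (f j)) ∧
    IsDecomposition R f ∧ IsIndependent R f ∧
    (∀ i, stoichSubspace (f i) =
      Submodule.span ℝ {(Pi.single i 1 : Fin m → ℝ)}) ∧
    crnRank R = m ∧ crnRank R = ∑ i, crnRank (f i) := by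

  have hstoich : ∀ i, stoichSubspace (f i) =
      Submodule.span ℝ {(Pi.single i 1 : Fin m → ℝ)} := by
    intro i
    rw [hf i]
    exact aux_stoich i (Rb i) (Pb i)
  have hdisj : Pairwise fun i j => Disjoint (f i) (f j) := by
    intro i j hij
    rw [Finset.disjoint_left]
    intro r hri hrj
    rw [hf i, Finset.mem_insert, Finset.mem_singleton] at hri
    rw [hf j, Finset.mem_insert, Finset.mem_singleton] at hrj
    rcases hri with rfl | rfl <;> rcases hrj with h | h <;>
      obtain ⟨h1, h2⟩ := Prod.ext_iff.mp h
    · exact aux_key1 hij (Rb i) (Rb j) h1 h2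
    · exact aux_key2 (Rb i) (Pb j) h1 h2
    · exact aux_key2 (Pb i) (Rb j) h2 h1
    · exact aux_key1 hij (Pb i) (Pb j) h2 h1
  have hsub : ∀ i, f i ⊆ R := by
    intro i r hr
    rw [hR, Finset.mem_sup]
    exact ⟨i, Finset.mem_univ i, hr⟩
  have hcov : ∀ r ∈ R, ∃ i, r ∈ f i := by
    intro r hr
    rw [hR, Finset.mem_sup] at hr
    obtain ⟨i, -, hi⟩ := hr
    exact ⟨i, hi⟩
  have hcoe : (↑R : Set (Rxn (Fin m))) = ⋃ i, ↑(f i) := by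
    rw [hR]; ext r; simp [Finset.mem_sup]
  have hRsup : stoichSubspace R = ⨆ i, stoichSubspace (f i) := by
    unfold stoichSubspace
    rw [hcoe, Set.image_iUnion, Submodule.span_iUnion]
  have htop : stoichSubspace R = ⊤ := by
    rw [hRsup]
    simp_rw [hstoich]
    exact aux_sup_top
  have hne : ∀ i : Fin m, (Pi.single i 1 : Fin m → ℝ) ≠ 0 := by
    intro i h
    have := congrFun h i
    simp [Pi.single_apply] at this
  have hrank1 : ∀ i, crnRank (f i) = 1 := by
    intro i
    unfold crnRank
    rw [hstoich i]
    exact finrank_span_singleton (hne i)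
  have hrankR : crnRank R = m := by
    unfold crnRank
    rw [htop, finrank_top]
    simp [Module.finrank_fin_fun]
  refine ⟨hdisj, ⟨?_, hdisj, hsub, hcov⟩, ⟨hRsup.symm, ?_⟩, hstoich, hrankR, ?_⟩
  · intro i
    rw [hf i]
    exact ⟨_, Finset.mem_insert_self _ _⟩
  · simp_rw [hstoich]
    exact aux_li.iSupIndep_span_singleton
  · rw [hrankR]
    simp [hrank1]

end
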